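/- arXiv:1704.00592 — 2 statements merged into one kernel-verified Lean document; each statement's English description precedes it below -/
import Mathlib

section
/- Let $\rho_p > 0$, $\nu_p \in \mathbb{R}$, $\tilde\nu_c \geq 0$, $\tilde\rho_c \in \mathbb{R}$, $\alpha, \gamma > 0$, $\delta_p \in (0,1]$. Suppose $\tilde\rho_c + \nu_p - |\nu_p| - \frac{1}{2\alpha} \geq 0$. Then for all vectors $w, y_p, \tilde y_c, e_p \in \mathbb{R}^m$ with $\|e_p\|_2^2 \leq \delta_p \|y_p\|_2^2$: $(w - \tilde y_c)^T y_p - \nu_p \|w - \tilde y_c\|_2^2 - \rho_p \|y_p\|_2^2 + (y_p - e_p)^T \tilde y_c - \tilde\nu_c \|y_p - e_p\|_2^2 - \tilde\rho_c \|\tilde y_c\|_2^2 \leq (\gamma + |\nu_p| - \nu_p)\|w\|_2^2 - (\rho_p - \tfrac{\delta_p \alpha}{2} - \tfrac{1}{4\gamma})\|y_p\|_2^2$. -/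
set_option maxHeartbeats 1000000 in
theorem stmt_11 (m : ℕ) (ρp νp νc ρc α γ δp : ℝ)
    (hρp : 0 < ρp) (hνc : 0 ≤ νc) (hα : 0 < α) (hγ : 0 < γ)
    (hδ0 : 0 < δp) (hδ1 : δp ≤ 1)
    (hstab : 0 ≤ ρc + νp - |νp| - 1 / (2 * α)) :
    ∀ w yp yc ep : EuclideanSpace ℝ (Fin m), ‖ep‖ ^ 2 ≤ δp * ‖yp‖ ^ 2 →
      (inner ℝ (w - yc) yp : ℝ) - νp * ‖w - yc‖ ^ 2 - ρp * ‖yp‖ ^ 2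
        + (inner ℝ (yp - ep) yc : ℝ) - νc * ‖yp - ep‖ ^ 2 - ρc * ‖yc‖ ^ 2
      ≤ (γ + |νp| - νp) * ‖w‖ ^ 2 - (ρp - δp * α / 2 - 1 / (4 * γ)) * ‖yp‖ ^ 2 := by
  intro w yp yc ep hep
  have h1 : (inner ℝ (w - yc) yp : ℝ) = inner ℝ w yp - inner ℝ yc yp := inner_sub_left _ _ _
  have h2 : (inner ℝ (yp - ep) yc : ℝ) = inner ℝ yp yc - inner ℝ ep yc := inner_sub_left _ _ _
  have h3 : (inner ℝ yc yp : ℝ) = inner ℝ yp yc := real_inner_comm _ _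
  have hwy : (inner ℝ w yp : ℝ) ≤ ‖w‖ * ‖yp‖ := real_inner_le_norm _ _
  have hec : -(inner ℝ ep yc : ℝ) ≤ ‖ep‖ * ‖yc‖ := by
    have h := abs_real_inner_le_norm ep yc
    have h' := neg_abs_le (inner ℝ ep yc : ℝ)
    linarith
  have hsub : ‖w - yc‖ ^ 2 ≤ 2 * ‖w‖ ^ 2 + 2 * ‖yc‖ ^ 2 := by
    have h := norm_sub_le w yc
    nlinarith [norm_nonneg w, norm_nonneg yc, norm_nonneg (w - yc),
      sq_nonneg (‖w‖ - ‖yc‖)]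
  have hνcterm : 0 ≤ νc * ‖yp - ep‖ ^ 2 := by positivity
  have hyoung1 : ‖w‖ * ‖yp‖ ≤ γ * ‖w‖ ^ 2 + 1 / (4 * γ) * ‖yp‖ ^ 2 := by
    rw [← sub_nonneg]
    have h : γ * ‖w‖ ^ 2 + 1 / (4 * γ) * ‖yp‖ ^ 2 - ‖w‖ * ‖yp‖
        = (2 * γ * ‖w‖ - ‖yp‖) ^ 2 / (4 * γ) := by
      field_simp; ring
    rw [h]; positivity
  have hyoung2 : ‖ep‖ * ‖yc‖ ≤ α / 2 * ‖ep‖ ^ 2 + 1 / (2 * α) * ‖yc‖ ^ 2 := by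
    rw [← sub_nonneg]
    have h : α / 2 * ‖ep‖ ^ 2 + 1 / (2 * α) * ‖yc‖ ^ 2 - ‖ep‖ * ‖yc‖
        = (α * ‖ep‖ - ‖yc‖) ^ 2 / (2 * α) := by
      field_simp; ring
    rw [h]; positivity
  have hepb : α / 2 * ‖ep‖ ^ 2 ≤ δp * α / 2 * ‖yp‖ ^ 2 := by
    nlinarith
  have hnp : -(νp * ‖w - yc‖ ^ 2) ≤ (|νp| - νp) * (‖w‖ ^ 2 + ‖yc‖ ^ 2) := by
    rcases le_or_gt 0 νp with h | h
    · rw [abs_of_nonneg h]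
      nlinarith [mul_nonneg h (sq_nonneg ‖w - yc‖)]
    · rw [abs_of_neg h]
      nlinarith [mul_le_mul_of_nonneg_left hsub (by linarith : (0:ℝ) ≤ -νp)]
  have hyc2 : (0:ℝ) ≤ ‖yc‖ ^ 2 := sq_nonneg _
  have hstab' : 0 ≤ (ρc + νp - |νp| - 1 / (2 * α)) * ‖yc‖ ^ 2 :=
    mul_nonneg hstab hyc2
  rw [h1, h2, h3]
  linarith only [hwy, hec, hyoung1, hyoung2, hepb, hnp, hνcterm, hstab']
end

section
/- Let $\rho_p > 0$, $\nu_p \in \mathbb{R}$, $\tilde\nu_c < 0$, $\tilde\rho_c \in \mathbb{R}$, $\alpha, \gamma > 0$, $\delta_p \in (0,1]$. Suppose $\tilde\rho_c + \nu_p - |\nu_p| - \frac{1}{2\alpha} \geq 0$. Then for all vectors $w, y_p, \tilde y_c, e_p \in \mathbb{R}^m$ with $\|e_p\|_2^2 \leq \delta_p \|y_p\|_2^2$: $(w - \tilde y_c)^T y_p - \nu_p \|w - \tilde y_c\|_2^2 - \rho_p \|y_p\|_2^2 + (y_p - e_p)^T \tilde y_c - \tilde\nu_c \|y_p - e_p\|_2^2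 - \tilde\rho_c \|\tilde y_c\|_2^2 \leq (\gamma + |\nu_p| - \nu_p)\|w\|_2^2 - \big(\rho_p + 2\tilde\nu_c - \delta_p(\tfrac{\alpha}{2} - 2\tilde\nu_c) - \tfrac{1}{4\gamma}\big)\|y_p\|_2^2$. -/
private lemma aux_young_div4 (γ a b p : ℝ) (hγ : 0 < γ) (h : p ≤ a * b) :
    p ≤ γ * a ^ 2 + 1 / (4 * γ) * b ^ 2 := by
  have key : γ * a ^ 2 + 1 / (4 * γ) * b ^ 2 - a * b = (2 * γ * a - b) ^ 2 / (4 * γ) := by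
    field_simp; ring
  nlinarith [div_nonneg (sq_nonneg (2 * γ * a - b)) (le_of_lt (by linarith : (0:ℝ) < 4 * γ))]

private lemma aux_young_div2 (α e c r : ℝ) (hα : 0 < α) (h : -r ≤ e * c) :
    -r ≤ α / 2 * e ^ 2 + 1 / (2 * α) * c ^ 2 := by
  have key : α / 2 * e ^ 2 + 1 / (2 * α) * c ^ 2 - e * c = (α * e - c) ^ 2 / (2 * α) := by
    field_simp; ring
  nlinarith [div_nonneg (sq_nonneg (α * e - c)) (le_of_lt (by linarith : (0:ℝ) < 2 * α))]

private lemma aux_abs (ν a c q : ℝ) (h1 : ν * q ≤ |ν| * (a * c)) :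
    2 * ν * q ≤ |ν| * (a ^ 2 + c ^ 2) := by
  nlinarith [mul_nonneg (abs_nonneg ν) (sq_nonneg (a - c))]

private lemma aux_neg (νc b e s : ℝ) (hνc : νc < 0) (h1 : νc * s ≤ -νc * (b * e)) :
    2 * νc * s ≤ -νc * (b ^ 2 + e ^ 2) := by
  nlinarith [mul_nonneg (le_of_lt (by linarith : (0:ℝ) < -νc)) (sq_nonneg (b - e))]

theorem stmt_12 (m : ℕ) (ρp νp νc ρc α γ δp : ℝ)
    (hρp : 0 < ρp) (hνc : νc < 0) (hα : 0 < α) (hγ : 0 < γ)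
    (hδ0 : 0 < δp) (hδ1 : δp ≤ 1)
    (hstab : 0 ≤ ρc + νp - |νp| - 1 / (2 * α)) :
    ∀ w yp yc ep : EuclideanSpace ℝ (Fin m), ‖ep‖ ^ 2 ≤ δp * ‖yp‖ ^ 2 →
      (inner ℝ (w - yc) yp : ℝ) - νp * ‖w - yc‖ ^ 2 - ρp * ‖yp‖ ^ 2
        + (inner ℝ (yp - ep) yc : ℝ) - νc * ‖yp - ep‖ ^ 2 - ρc * ‖yc‖ ^ 2
      ≤ (γ + |νp| - νp) * ‖w‖ ^ 2
        - (ρp + 2 * νc - δp * (α / 2 - 2 * νc) - 1 / (4 * γ)) * ‖yp‖ ^ 2 := by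
  intro w yp yc ep hep
  set a := ‖w‖ with ha
  set b := ‖yp‖ with hb
  set c := ‖yc‖ with hc
  set e := ‖ep‖ with he
  -- expansions
  have exp1 : ‖w - yc‖ ^ 2 = a ^ 2 - 2 * (inner ℝ w yc : ℝ) + c ^ 2 := by
    rw [norm_sub_sq_real]
  have exp2 : ‖yp - ep‖ ^ 2 = b ^ 2 - 2 * (inner ℝ yp ep : ℝ) + e ^ 2 := by
    rw [norm_sub_sq_real]
  have exp3 : (inner ℝ (w - yc) yp : ℝ) = (inner ℝ w yp : ℝ) - (inner ℝ yp yc : ℝ) := by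
    rw [inner_sub_left, real_inner_comm yc yp]
  have exp4 : (inner ℝ (yp - ep) yc : ℝ) = (inner ℝ yp yc : ℝ) - (inner ℝ ep yc : ℝ) := by
    rw [inner_sub_left]
  -- L1 : ⟪w,yp⟫ ≤ γ a² + b²/(4γ)
  have L1 : (inner ℝ w yp : ℝ) ≤ γ * a ^ 2 + 1 / (4 * γ) * b ^ 2 :=
    aux_young_div4 γ a b _ hγ (real_inner_le_norm w yp)
  -- L2 : 2 νp ⟪w,yc⟫ ≤ |νp| (a² + c²)
  have L2 : 2 * νp * (inner ℝ w yc : ℝ) ≤ |νp| * (a ^ 2 + c ^ 2) := by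
    refine aux_abs νp a c _ ?_
    calc νp * (inner ℝ w yc : ℝ) ≤ |νp * (inner ℝ w yc : ℝ)| := le_abs_self _
      _ = |νp| * |(inner ℝ w yc : ℝ)| := abs_mul _ _
      _ ≤ |νp| * (a * c) :=
          mul_le_mul_of_nonneg_left (abs_real_inner_le_norm w yc) (abs_nonneg _)
  -- L3 : -⟪ep,yc⟫ ≤ (α/2) e² + c²/(2α)
  have L3 : -(inner ℝ ep yc : ℝ) ≤ α / 2 * e ^ 2 + 1 / (2 * α) * c ^ 2 := by
    refine aux_young_div2 α e c _ hα ?_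
    have h1 := abs_real_inner_le_norm ep yc
    have h2 := neg_abs_le (inner ℝ ep yc : ℝ)
    linarith
  -- L4 : 2 νc ⟪yp,ep⟫ ≤ -νc (b² + e²)
  have L4 : 2 * νc * (inner ℝ yp ep : ℝ) ≤ -νc * (b ^ 2 + e ^ 2) := by
    refine aux_neg νc b e _ hνc ?_
    calc νc * (inner ℝ yp ep : ℝ) ≤ |νc * (inner ℝ yp ep : ℝ)| := le_abs_self _
      _ = |νc| * |(inner ℝ yp ep : ℝ)| := abs_mul _ _
      _ ≤ |νc| * (b * e) :=
          mul_le_mul_of_nonneg_left (abs_real_inner_le_norm yp ep) (abs_nonneg _)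
      _ = -νc * (b * e) := by rw [abs_of_neg hνc]
  -- L5 : (α/2 - 2νc) e² ≤ δp (α/2 - 2νc) b²
  have L5 : (α / 2 - 2 * νc) * e ^ 2 ≤ δp * (α / 2 - 2 * νc) * b ^ 2 := by
    have hcoef : 0 ≤ α / 2 - 2 * νc := by linarith
    calc (α / 2 - 2 * νc) * e ^ 2 ≤ (α / 2 - 2 * νc) * (δp * b ^ 2) :=
          mul_le_mul_of_nonneg_left hep hcoef
      _ = δp * (α / 2 - 2 * νc) * b ^ 2 := by ring
  -- L6 : stabilization term
  have L6 : 0 ≤ (ρc + νp - |νp| - 1 / (2 * α)) * c ^ 2 :=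
    mul_nonneg hstab (sq_nonneg _)
  rw [exp1, exp2, exp3, exp4]
  linarith
end
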